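/- Let k ≥ 1 and let m be an integer not divisible by k+2, and set q := exp(mπi/(k+2)) ∈ ℂ. Then the global dimension of the category C_{k,m}, namely the sum of the squares of the categorical dimensions of its k+1 simple objects, satisfies Σ_{n=0}^{k} ([n+1]_q)² = 2(k+2)/(2 − q² − q^{−2}). (The categorical dimension of X_n in C_{k,m,+} is (−1)^n[n+1]_q, so the global dimension is Σ_{n=0}^{k} [n+1]_q².) -/

import Mathlib

/-- The quantum integer `[n]_q = (q^n - q^(-n))/(q - q⁻¹)`. -/
noncomputable def qint (q : ℂ) (n : ℤ) : ℂ := (q ^ n - q ^ (-n)) / (q - q⁻¹)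

/-- For `k ≥ 1`, `m` not divisible by `k+2`, and `q = exp(mπi/(k+2))`, the global
dimension of `C_{k,m}`, i.e. the sum of the squares of the categorical dimensions
`(-1)^n [n+1]_q` of its `k+1` simple objects, equals `2(k+2)/(2 - q² - q^(-2))`. -/
theorem stmt2 (k : ℕ) (hk : 1 ≤ k) (m : ℤ) (hm : ¬ ((k : ℤ) + 2) ∣ m)
    (q : ℂ) (hq : q = Complex.exp ((m : ℂ) * (Real.pi : ℂ) * Complex.I / ((k : ℂ) + 2))) :
    ∑ n ∈ Finset.range (k + 1), (qint q ((n : ℤ) + 1)) ^ 2 =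
      2 * ((k : ℂ) + 2) / (2 - q ^ (2 : ℤ) - q ^ (-2 : ℤ)) := by
  have hk2 : ((k : ℂ) + 2) ≠ 0 := by
    intro h
    have := congrArg Complex.re h
    simp at this
    linarith [this, Nat.cast_nonneg (α := ℝ) k]
  have hpi : (Real.pi : ℂ) ≠ 0 := by
    simp [Complex.ofReal_ne_zero, Real.pi_ne_zero]
  have hI : Complex.I ≠ 0 := Complex.I_ne_zero
  have hq0 : q ≠ 0 := by rw [hq]; exact Complex.exp_ne_zero _
  set z : ℂ := q ^ 2 with hzdef
  have hz0 : z ≠ 0 := pow_ne_zero _ hq0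
  -- z ≠ 1
  have hz1 : z ≠ 1 := by
    intro h
    have hz : Complex.exp ((2:ℕ) * ((m : ℂ) * (Real.pi : ℂ) * Complex.I / ((k : ℂ) + 2))) = 1 := by
      rw [Complex.exp_nat_mul, ← hq]; exact h
    rw [Complex.exp_eq_one_iff] at hz
    obtain ⟨n, hn⟩ := hz
    apply hm
    refine ⟨n, ?_⟩
    have key : (2*(Real.pi:ℂ)*Complex.I) * (m:ℂ)
        = (2*(Real.pi:ℂ)*Complex.I) * ((n:ℂ)*((k:ℂ)+2)) := by
      field_simp at hn
      push_cast at hn; linear_combination (Real.pi:ℂ) * Complex.I * hn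
    have h2 : (m:ℂ) = (n:ℂ)*((k:ℂ)+2) :=
      mul_left_cancel₀ (by simp [hpi, hI]) key
    have : ((m : ℤ) : ℂ) = (((k:ℤ)+2) * n : ℤ) := by push_cast; linear_combination h2
    exact_mod_cast this
  -- z^(k+2) = 1
  have hzk : z ^ (k + 2) = 1 := by
    have e : z ^ (k+2) = Complex.exp (((2*(k+2):ℕ):ℂ) * ((m : ℂ) * (Real.pi : ℂ) * Complex.I / ((k : ℂ) + 2))) := by
      rw [Complex.exp_nat_mul, ← hq, hzdef, ← pow_mul]
    rw [e]
    have harg : ((2*(k+2):ℕ) : ℂ) * ((m : ℂ) * (Real.pi : ℂ) * Complex.I / ((k : ℂ) + 2))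
        = (m:ℂ) * (2 * Real.pi * Complex.I) := by
      push_cast
      field_simp
    rw [harg]
    exact_mod_cast Complex.exp_int_mul_two_pi_mul_I m
  have hzm1 : z - 1 ≠ 0 := sub_ne_zero.mpr hz1
  have hziv1 : z⁻¹ ≠ 1 := by
    intro h
    exact hz1 (by rw [← inv_inv z, h, inv_one])
  -- geometric sums
  have hgs : ∑ n ∈ Finset.range (k + 2), z ^ n = 0 := by
    rw [geom_sum_eq hz1, hzk]
    simp
  have hgs' : ∑ n ∈ Finset.range (k + 2), (z⁻¹) ^ n = 0 := by
    rw [geom_sum_eq hziv1,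
      show (z⁻¹)^(k+2) = 1 from by rw [inv_pow, hzk, inv_one]]
    simp
  have hsum1 : ∑ n ∈ Finset.range (k + 1), z ^ (n + 1) = -1 := by
    have h := Finset.sum_range_succ' (fun n => z ^ n) (k + 1)
    rw [hgs] at h
    simp only [pow_zero] at h
    linear_combination -h
  have hsum2 : ∑ n ∈ Finset.range (k + 1), (z⁻¹) ^ (n + 1) = -1 := by
    have h := Finset.sum_range_succ' (fun n => (z⁻¹) ^ n) (k + 1)
    rw [hgs'] at h
    simp only [pow_zero] at h
    linear_combination -h
  -- q - q⁻¹ ≠ 0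
  have haux : q * (q - q⁻¹) = z - 1 := by
    rw [hzdef]; field_simp
  have hqq : q - q⁻¹ ≠ 0 := by
    intro h
    rw [h, mul_zero] at haux
    exact hz1 (by linear_combination -haux)
  have hd : (q - q⁻¹) ^ 2 = (z - 1) ^ 2 / z := by
    rw [hzdef]; field_simp
  clear_value z
  -- term rewrite
  have hterm : ∀ n : ℕ, (qint q ((n : ℤ) + 1)) ^ 2
      = (z ^ (n+1) + (z⁻¹) ^ (n+1) - 2) * z / (z - 1) ^ 2 := by
    intro n
    rw [qint]
    have e1 : q ^ ((n:ℤ) + 1) = q ^ (n + 1) := by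
      rw [show ((n:ℤ)+1) = ((n+1:ℕ):ℤ) by push_cast; ring, zpow_natCast]
    have e2 : q ^ (-((n:ℤ) + 1)) = (q ^ (n + 1))⁻¹ := by
      rw [show -((n:ℤ)+1) = -((n+1:ℕ):ℤ) by push_cast; ring, zpow_neg, zpow_natCast]
    have ez : z ^ (n+1) = (q ^ (n+1)) ^ 2 := by
      rw [hzdef, ← pow_mul, ← pow_mul, Nat.mul_comm]
    have ez' : (z⁻¹) ^ (n+1) = ((q ^ (n+1)) ^ 2)⁻¹ := by
      rw [← ez, inv_pow]
    rw [e1, e2, ez, ez', div_pow, hd]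
    have ha : q ^ (n+1) ≠ 0 := pow_ne_zero _ hq0
    field_simp
    try ring
    try tauto
  rw [Finset.sum_congr rfl (fun n _ => hterm n)]
  rw [← Finset.sum_div, ← Finset.sum_mul]
  have hsum : ∑ n ∈ Finset.range (k + 1), (z ^ (n+1) + (z⁻¹) ^ (n+1) - 2)
      = -2 * ((k:ℂ) + 2) := by
    rw [Finset.sum_sub_distrib, Finset.sum_add_distrib, hsum1, hsum2]
    simp only [Finset.sum_const, Finset.card_range, nsmul_eq_mul]
    push_cast
    ring
  rw [hsum]
  -- RHS
  have hrhs : 2 - q ^ (2:ℤ) - q ^ (-2:ℤ) = -(z - 1)^2 / z := by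
    have h1 : q ^ (2:ℤ) = z := by
      rw [hzdef, show (2:ℤ) = ((2:ℕ):ℤ) by norm_num, zpow_natCast]
    have h2 : q ^ (-2:ℤ) = z⁻¹ := by
      rw [← h1, ← zpow_neg]
    rw [h1, h2]
    field_simp
    ring
  rw [hrhs]
  field_simp
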